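/- Let φ* : [0,T_g] → ℝᵐ be a continuous control trajectory each of whose m coordinate functions is Lipschitz continuous with constant α ≥ 0, let Δt > 0, let u*(t) = φ*(⌊t/Δt⌋·Δt) be its step-function approximation, and let u : [0,T_g] → ℝᵐ satisfy sup_{t ∈ [0,T_g]} ‖u(t) − u*(t)‖₁ ≤ ε. Let γ_{φ*} and γ_u be the state-space paths induced by φ* and u from the same initial state x₀, and let D : ℝⁿ → ℝ be Lipschitz continuous with constant L_D ≥ 0. Then |D(γ_{φ*}(t)) − D(γ_u(t))| ≤ L_D·(ε + m·α·Δt)·(exp(L_p·t) − 1) ≤ L_D·(ε + m·α·Δt)·(exp(L_p·T_g) − 1) for every t ∈ [0,T_g]. -/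
import Mathlib


open Real Set

/-- Lemma 3 of the paper: with `u*` the `Δt` step-function approximation of the
(coordinatewise `α`-Lipschitz) optimal trajectory `φ*`, `u` an `ε`-close trajectory,
`γ_{φ*}`, `γ_u` the induced state-space paths and `D` an `L_D`-Lipschitz cost,
`|D(γ_{φ*}(t)) − D(γ_u(t))| ≤ L_D (ε + mαΔt)(e^{L_p t} − 1) ≤ L_D (ε + mαΔt)(e^{L_p T_g} − 1)`. -/
theorem stmt_5 (n m : ℕ) (Lp Tg α Δt ε LD : ℝ) (hLp : 0 < Lp) (hTg : 0 < Tg)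
    (hα : 0 ≤ α) (hΔt : 0 < Δt) (hε : 0 ≤ ε) (hLD : 0 ≤ LD)
    (f : PiLp 1 (fun _ : Fin n => ℝ) → PiLp 1 (fun _ : Fin m => ℝ) → ℝ →
      PiLp 1 (fun _ : Fin n => ℝ))
    (hf : ∀ x y u v, ∀ t ∈ Icc (0:ℝ) Tg,
      ‖f x u t - f y v t‖ ≤ Lp * (‖x - y‖ + ‖u - v‖))
    (φs us u : ℝ → PiLp 1 (fun _ : Fin m => ℝ))
    (hφs : ContinuousOn φs (Icc 0 Tg))
    (hφsLip : ∀ i : Fin m, ∀ s ∈ Icc (0:ℝ) Tg, ∀ t ∈ Icc (0:ℝ) Tg,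
      |φs t i - φs s i| ≤ α * |t - s|)
    (hus : ∀ t, us t = φs ((⌊t / Δt⌋ : ℝ) * Δt))
    (hclose : ∀ t ∈ Icc (0:ℝ) Tg, ‖u t - us t‖ ≤ ε)
    (x₀ : PiLp 1 (fun _ : Fin n => ℝ))
    (γφs γu : ℝ → PiLp 1 (fun _ : Fin n => ℝ))
    (hγφs0 : γφs 0 = x₀) (hγu0 : γu 0 = x₀)
    (hγφs : ∀ t ∈ Icc (0:ℝ) Tg, HasDerivAt γφs (f (γφs t) (φs t) t) t)
    (hγu : ∀ t ∈ Icc (0:ℝ) Tg, HasDerivAt γu (f (γu t) (u t) t) t)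
    (D : PiLp 1 (fun _ : Fin n => ℝ) → ℝ)
    (hD : ∀ x y, |D x - D y| ≤ LD * ‖x - y‖) :
    ∀ t ∈ Icc (0:ℝ) Tg,
      |D (γφs t) - D (γu t)| ≤ LD * (ε + m * α * Δt) * (Real.exp (Lp * t) - 1) ∧
      LD * (ε + m * α * Δt) * (Real.exp (Lp * t) - 1) ≤
        LD * (ε + m * α * Δt) * (Real.exp (Lp * Tg) - 1) := by
  set C : ℝ := ε + m * α * Δt with hCdef
  have hC : 0 ≤ C := by positivity
  -- control difference bound
  have hctrl : ∀ x ∈ Icc (0:ℝ) Tg, ‖φs x - u x‖ ≤ C := by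
    intro x hx
    set s : ℝ := (⌊x / Δt⌋ : ℝ) * Δt with hs
    have hs0 : 0 ≤ s := by
      have : (0:ℤ) ≤ ⌊x / Δt⌋ := Int.floor_nonneg.2 (div_nonneg hx.1 hΔt.le)
      have : (0:ℝ) ≤ (⌊x / Δt⌋ : ℝ) := by exact_mod_cast this
      positivity
    have hsx : s ≤ x := by
      have h1 : (⌊x / Δt⌋ : ℝ) ≤ x / Δt := Int.floor_le _
      calc s ≤ (x / Δt) * Δt := by
              exact mul_le_mul_of_nonneg_right h1 hΔt.le
        _ = x := by field_simp
    have hsT : s ∈ Icc (0:ℝ) Tg := ⟨hs0, hsx.trans hx.2⟩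
    have hxs : |x - s| ≤ Δt := by
      have h2 : x / Δt - 1 < (⌊x / Δt⌋ : ℝ) := Int.sub_one_lt_floor _
      have : x - s < Δt := by
        have := mul_lt_mul_of_pos_right h2 hΔt
        have hxd : (x / Δt) * Δt = x := by field_simp
        nlinarith
      rw [abs_of_nonneg (by linarith)]
      linarith
    have hstep : ‖φs x - us x‖ ≤ (m : ℝ) * α * Δt := by
      rw [hus, ← hs]
      have hnorm : ‖φs x - φs s‖ = ∑ i, |φs x i - φs s i| := by
        rw [PiLp.norm_eq_sum (p := 1) (by norm_num)]
        simp [Real.norm_eq_abs]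
      rw [hnorm]
      calc ∑ i, |φs x i - φs s i| ≤ ∑ _i : Fin m, α * Δt := by
            apply Finset.sum_le_sum
            intro i _
            exact (hφsLip i s hsT x hx).trans
              (mul_le_mul_of_nonneg_left hxs hα)
        _ = (m : ℝ) * α * Δt := by
            simp [Finset.sum_const, mul_assoc]
    calc ‖φs x - u x‖ ≤ ‖φs x - us x‖ + ‖us x - u x‖ := norm_sub_le_norm_sub_add_norm_sub _ _ _
      _ ≤ (m : ℝ) * α * Δt + ε := by
          have := hclose x hx
          rw [← norm_neg (us x - u x)]
          simp only [neg_sub]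
          linarith
      _ = C := by rw [hCdef]; ring
  -- Grönwall
  have key : ∀ t ∈ Icc (0:ℝ) Tg, ‖γφs t - γu t‖ ≤ C * (Real.exp (Lp * t) - 1) := by
    have gb := norm_le_gronwallBound_of_norm_deriv_right_le
      (f := fun t => γφs t - γu t)
      (f' := fun t => f (γφs t) (φs t) t - f (γu t) (u t) t)
      (δ := 0) (K := Lp) (ε := Lp * C) (a := 0) (b := Tg)
      (fun x hx => (((hγφs x hx).sub (hγu x hx)).continuousAt).continuousWithinAt)
      (fun x hx => (((hγφs x (Ico_subset_Icc_self hx)).sub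
        (hγu x (Ico_subset_Icc_self hx)))).hasDerivWithinAt)
      (by simp [hγφs0, hγu0])
      (fun x hx => by
        have h1 := hf (γφs x) (γu x) (φs x) (u x) x (Ico_subset_Icc_self hx)
        have h2 := hctrl x (Ico_subset_Icc_self hx)
        calc ‖f (γφs x) (φs x) x - f (γu x) (u x) x‖
            ≤ Lp * (‖γφs x - γu x‖ + ‖φs x - u x‖) := h1
          _ ≤ Lp * ‖γφs x - γu x‖ + Lp * C := by nlinarith)
    intro t ht
    have := gb t ht
    rw [gronwallBound_of_K_ne_0 hLp.ne', sub_zero] at this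
    simp only [zero_mul, zero_add] at this
    rwa [mul_comm Lp C, mul_div_assoc, div_self hLp.ne', mul_one] at this
  intro t ht
  constructor
  · calc |D (γφs t) - D (γu t)| ≤ LD * ‖γφs t - γu t‖ := hD _ _
      _ ≤ LD * (C * (Real.exp (Lp * t) - 1)) :=
          mul_le_mul_of_nonneg_left (key t ht) hLD
      _ = LD * C * (Real.exp (Lp * t) - 1) := by ring
  · apply mul_le_mul_of_nonneg_left _ (by positivity)
    have : Lp * t ≤ Lp * Tg := mul_le_mul_of_nonneg_left ht.2 hLp.le
    linarith [Real.exp_le_exp.2 this]
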